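/- For all integers n ≥ 0, positive integers β, γ, and any rational α, one has ∑_{i=0}^n (-1)^{n-i} * C((β-1)*i + α, n-i) * (γ/(β*i+γ)) * C(β*i+γ, i) = (-1)^n * C(α-γ, n), where C(x, k) = x(x-1)···(x-k+1)/k! is the generalized binomial coefficient. -/

import Mathlib

open Finset Polynomial

lemma descPoch_prod (x : ℚ) (k : ℕ) :
    (descPochhammer ℤ k).smeval x = ∏ j ∈ range k, (x - j) := by
  induction k with
  | zero => simp [descPochhammer_zero, Polynomial.smeval_one]
  | succ k ih =>
    rw [descPochhammer_succ_right, Polynomial.smeval_mul, ih, prod_range_succ,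
      Polynomial.smeval_sub, Polynomial.smeval_X, Polynomial.smeval_natCast]
    simp

lemma ring_choose_eq_prod (x : ℚ) (k : ℕ) :
    Ring.choose x k = (∏ j ∈ range k, (x - j)) / k.factorial := by
  have h2 := Ring.descPochhammer_eq_factorial_smul_choose x k
  rw [descPoch_prod] at h2
  have : (k.factorial : ℚ) ≠ 0 := by exact_mod_cast k.factorial_ne_zero
  field_simp [h2, nsmul_eq_mul]
  rw [h2, nsmul_eq_mul, mul_comm]

lemma choose_absorb (x : ℚ) (k : ℕ) :
    Ring.choose x (k + 1) * (k + 1) = x * Ring.choose (x - 1) k := by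
  rw [ring_choose_eq_prod, ring_choose_eq_prod, prod_range_succ']
  have hf : ((k+1).factorial : ℚ) = (k.factorial : ℚ) * (k+1) := by
    rw [Nat.factorial_succ]; push_cast; ring
  have h1 : (k.factorial : ℚ) ≠ 0 := by exact_mod_cast k.factorial_ne_zero
  have h2 : ((k:ℚ) + 1) ≠ 0 := by positivity
  have h3 : ∏ j ∈ range k, (x - (↑(j + 1) : ℚ)) = ∏ j ∈ range k, (x - 1 - j) := by
    apply prod_congr rfl; intro j _; push_cast; ring
  rw [hf, h3]
  push_cast
  field_simp
  ring

lemma choose_reflect (x : ℚ) (k : ℕ) :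
    Ring.choose ((k : ℚ) - 1 - x) k = (-1) ^ k * Ring.choose x k := by
  rw [ring_choose_eq_prod, ring_choose_eq_prod]
  have : ∏ j ∈ range k, ((k : ℚ) - 1 - x - j) = (-1)^k * ∏ j ∈ range k, (x - j) := by
    rw [← prod_range_reflect (fun j => (x - j))]
    have hk : (-1:ℚ)^k = ∏ _j ∈ range k, (-1:ℚ) := by simp
    rw [hk, ← prod_mul_distrib]
    apply prod_congr rfl
    intro j hj
    have hj' : j < k := mem_range.mp hj
    have : ((k - 1 - j : ℕ) : ℚ) = (k : ℚ) - 1 - j := by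
      have : j + 1 ≤ k := hj'
      push_cast [Nat.cast_sub (by omega : j ≤ k - 1), Nat.cast_sub (by omega : 1 ≤ k)]
      ring
    rw [this]
    ring
  rw [this, mul_div_assoc]

lemma pascal (x : ℚ) (k : ℕ) :
    Ring.choose (x + 1) (k + 1) = Ring.choose x k + Ring.choose x (k + 1) :=
  Ring.choose_succ_succ x k

noncomputable def Aa (z : ℕ) (x : ℚ) : ℕ → ℚ
  | 0 => 1
  | (k + 1) => Ring.choose (x + ((k : ℚ) + 1) * z) (k + 1)
      - z * Ring.choose (x + ((k : ℚ) + 1) * z - 1) k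

lemma Aa_zero (z : ℕ) (k : ℕ) : Aa z 0 (k + 1) = 0 := by
  have h := choose_absorb (((k : ℚ) + 1) * z) k
  simp only [Aa, zero_add]
  have hk : ((k : ℚ) + 1) ≠ 0 := by positivity
  have h2 : Ring.choose (((k:ℚ)+1)*z) (k+1) = z * Ring.choose (((k:ℚ)+1)*z - 1) k := by
    apply mul_right_cancel₀ hk
    linear_combination h
  linear_combination h2

lemma Aa_succ (z : ℕ) (x : ℚ) (k : ℕ) :
    Aa z (x + 1) (k + 1) = Aa z x (k + 1) + Aa z (x + z) k := by
  cases k with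
  | zero =>
    simp only [Aa, Nat.cast_zero]
    rw [show x + 1 + (0 + 1) * (z:ℚ) = (x + (0+1)*z) + 1 by ring]
    simp [Ring.choose_one_right, Ring.choose_zero_right]
    ring
  | succ j =>
    simp only [Aa]
    push_cast
    rw [show x + 1 + ((j:ℚ) + 1 + 1) * z = (x + ((j:ℚ) + 1 + 1) * z) + 1 by ring,
        show x + ((j:ℚ) + 1 + 1) * z + 1 - 1 = x + ((j:ℚ) + 1 + 1) * z by ring,
        show x + (z:ℚ) + ((j:ℚ) + 1) * z = x + ((j:ℚ) + 1 + 1) * z by ring]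
    have h1 := pascal (x + ((j:ℚ) + 1 + 1) * z) (j + 1)
    have h2 := pascal (x + ((j:ℚ) + 1 + 1) * z - 1) j
    rw [show x + ((j:ℚ) + 1 + 1) * z - 1 + 1 = x + ((j:ℚ) + 1 + 1) * z by ring] at h2
    linear_combination h1 - (z:ℚ) * h2

lemma rothe (z : ℕ) : ∀ (n m : ℕ) (y : ℚ),
    ∑ i ∈ range (n + 1), Aa z m (n - i) * Ring.choose (y + (i : ℚ) * z) i
      = Ring.choose ((m : ℚ) + y + (n : ℚ) * z) n := by
  intro n
  induction n with
  | zero =>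
    intro m y
    simp [Aa, Ring.choose_zero_right]
  | succ n ihn =>
    intro m
    induction m with
    | zero =>
      intro y
      rw [Finset.sum_eq_single (n + 1)]
      · simp only [Nat.sub_self, Aa, one_mul, Nat.cast_zero, zero_add]
      · intro i hi hne
        have h : n + 1 - i = (n - i) + 1 := by
          have := mem_range.mp hi
          omega
        rw [h, show ((0:ℕ):ℚ) = 0 from by norm_num, Aa_zero, zero_mul]
      · intro h
        exact absurd (self_mem_range_succ (n + 1)) h
    | succ m ihm =>
      intro y
      have hpeel : ∀ (x : ℚ), ∑ i ∈ range (n + 1 + 1), Aa z x (n + 1 - i) * Ring.choose (y + (i:ℚ) * z) i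
          = (∑ i ∈ range (n + 1), Aa z x ((n - i) + 1) * Ring.choose (y + (i:ℚ) * z) i)
            + Ring.choose (y + ((n:ℚ) + 1) * z) (n + 1) := by
        intro x
        rw [sum_range_succ, Nat.sub_self]
        congr 1
        · apply sum_congr rfl
          intro i hi
          have hi2 : i ≤ n := Nat.lt_succ_iff.mp (mem_range.mp hi)
          rw [show n + 1 - i = (n - i) + 1 from by omega]
        · simp only [Aa, one_mul]
          push_cast
          rfl
      have hcast : ((m + 1 : ℕ) : ℚ) = (m : ℚ) + 1 := by push_cast; ring
      rw [hcast, hpeel]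
      have hsplit : ∑ i ∈ range (n + 1), Aa z ((m:ℚ) + 1) ((n - i) + 1) * Ring.choose (y + (i:ℚ) * z) i
          = (∑ i ∈ range (n + 1), Aa z (m:ℚ) ((n - i) + 1) * Ring.choose (y + (i:ℚ) * z) i)
            + ∑ i ∈ range (n + 1), Aa z ((m:ℚ) + (z:ℚ)) (n - i) * Ring.choose (y + (i:ℚ) * z) i := by
        rw [← sum_add_distrib]
        apply sum_congr rfl
        intro i hi
        rw [Aa_succ]
        ring
      rw [hsplit]
      have h2 : ∑ i ∈ range (n + 1), Aa z ((m:ℚ) + (z:ℚ)) (n - i) * Ring.choose (y + (i:ℚ) * z) i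
          = Ring.choose ((m:ℚ) + (z:ℚ) + y + (n:ℚ) * z) n := by
        have h := ihn (m + z) y
        have : ((m + z : ℕ) : ℚ) = (m:ℚ) + (z:ℚ) := by push_cast; ring
        rw [this] at h
        exact h
      have h1 : (∑ i ∈ range (n + 1), Aa z (m:ℚ) ((n - i) + 1) * Ring.choose (y + (i:ℚ) * z) i)
            + Ring.choose (y + ((n:ℚ) + 1) * z) (n + 1)
          = Ring.choose ((m:ℚ) + y + ((n:ℚ) + 1) * z) (n + 1) := by
        have h := ihm y
        rw [hpeel] at h
        rw [h, show ((n + 1 : ℕ) : ℚ) = (n:ℚ) + 1 from by push_cast; ring]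
      rw [show ((n + 1 : ℕ) : ℚ) = (n:ℚ) + 1 from by push_cast; ring]
      rw [show (m:ℚ) + (z:ℚ) + y + (n:ℚ) * z = (m:ℚ) + y + ((n:ℚ) + 1) * z from by ring] at h2
      have hp2 := pascal ((m:ℚ) + y + ((n:ℚ) + 1) * z) n
      rw [show ((m:ℚ) + y + ((n:ℚ) + 1) * z + 1) = (m:ℚ) + 1 + y + ((n:ℚ) + 1) * z from by ring] at hp2
      linear_combination h1 + h2 - hp2

lemma coeff_eq_Aa (β γ : ℕ) (hγ : 0 < γ) (i : ℕ) :
    (γ : ℚ) / (β * i + γ) * ((β * i + γ).choose i : ℚ) = Aa β γ i := by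
  cases i with
  | zero =>
    have : (γ:ℚ) ≠ 0 := by positivity
    simp [Aa, this]
  | succ k =>
    have hc : ((β:ℚ) * (k + 1) + γ) ≠ 0 := by positivity
    have hcast : ((β * (k + 1) + γ : ℕ) : ℚ) = (γ:ℚ) + ((k:ℚ) + 1) * β := by push_cast; ring
    rw [show ((β:ℚ) * ((k:ℕ)+1:ℕ) + γ) = (γ:ℚ) + ((k:ℚ) + 1) * β from by push_cast; ring]
    rw [← Ring.choose_natCast (R := ℚ) (β * (k + 1) + γ) (k + 1), hcast]
    have habs := choose_absorb ((γ:ℚ) + ((k:ℚ) + 1) * β) k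
    rw [div_mul_eq_mul_div, div_eq_iff (by positivity)]
    simp only [Aa]
    linear_combination (-(β:ℚ)) * habs

theorem stmt_2 (n : ℕ) (β γ : ℕ) (hβ : 0 < β) (hγ : 0 < γ) (α : ℚ) :
    ∑ i ∈ Finset.range (n + 1),
      (-1 : ℚ) ^ (n - i) * Ring.choose (((β : ℚ) - 1) * i + α) (n - i) *
        ((γ : ℚ) / (β * i + γ)) * ((β * i + γ).choose i)
      = (-1 : ℚ) ^ n * Ring.choose (α - γ) n := by
  set y : ℚ := (n : ℚ) - 1 - α - n * β with hy
  have hro := rothe β n γ y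
  rw [← Finset.sum_range_reflect] at hro
  simp only [Nat.add_sub_cancel] at hro
  have hstep : ∑ i ∈ range (n + 1),
      Aa β (γ:ℚ) (n - (n - i)) * Ring.choose (y + ((n - i : ℕ) : ℚ) * β) (n - i)
      = ∑ i ∈ Finset.range (n + 1),
      (-1 : ℚ) ^ (n - i) * Ring.choose (((β : ℚ) - 1) * i + α) (n - i) *
        ((γ : ℚ) / (β * i + γ)) * ((β * i + γ).choose i) := by
    apply sum_congr rfl
    intro i hi
    have hin : i ≤ n := Nat.lt_succ_iff.mp (mem_range.mp hi)
    have h1 : n - (n - i) = i := by omega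
    have h2 : ((n - i : ℕ) : ℚ) = (n : ℚ) - i := by
      push_cast [Nat.cast_sub hin]; ring
    rw [h1, h2]
    rw [show y + ((n:ℚ) - i) * β = ((n:ℚ) - i) - 1 - (((β : ℚ) - 1) * i + α) from by rw [hy]; ring]
    rw [← h2, choose_reflect]
    rw [← coeff_eq_Aa β γ hγ i]
    ring
  rw [← hstep, hro]
  rw [show (γ:ℚ) + y + (n:ℚ) * β = ((n:ℚ)) - 1 - (α - γ) from by rw [hy]; ring]
  have := choose_reflect (α - (γ:ℚ)) n
  rw [← this]
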